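/- For integers n ≥ 1 and 1 ≤ m ≤ n define c(n, m) = (1/m)·Σ_{k=1}^{m} (−1)^{m−k}·C(m, k)·kⁿ, where C(m, k) are binomial coefficients. Then for every integer n ≥ 1 and every real x > 0, (−1)^{n−1}·g^{(n−1)}(x) = Σ_{m=1}^{n} c(n, m)/(e^x − 1)^m, where g(x) = (e^x − 1)^{−1} and g^{(n−1)} is its (n−1)-st derivative. -/

import Mathlib

private noncomputable def ee (n m : ℕ) : ℝ :=
  ∑ j ∈ Finset.range m, (-1 : ℝ) ^ j * ((m.choose (j+1)) : ℝ) * ((j:ℝ)+1) ^ n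

private noncomputable def cc (n m : ℕ) : ℝ :=
  (1 / (m : ℝ)) * ∑ k ∈ Finset.Icc 1 m, (-1 : ℝ) ^ (m - k) * (m.choose k) * (k : ℝ) ^ n

private lemma sum_Icc_one (f : ℕ → ℝ) (N : ℕ) :
    ∑ m ∈ Finset.Icc 1 N, f m = ∑ j ∈ Finset.range N, f (j+1) := by
  induction N with
  | zero => simp
  | succ n ih => rw [Finset.sum_Icc_succ_top (by omega), Finset.sum_range_succ, ih]

private lemma neg_one_pow_sub (a b : ℕ) (h : b ≤ a) :
    (-1 : ℝ) ^ (a - b) = (-1) ^ a * (-1) ^ b := by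
  obtain ⟨c, rfl⟩ := Nat.exists_eq_add_of_le h
  rw [Nat.add_sub_cancel_left, pow_add, mul_comm ((-1:ℝ)^b), mul_assoc, ← pow_add]
  have : (-1 : ℝ) ^ (b + b) = 1 := Even.neg_one_pow (⟨b, rfl⟩ : Even (b + b))
  rw [this, mul_one]

private lemma cc_eq (n m : ℕ) (hm : 1 ≤ m) :
    cc n m = (1 / (m : ℝ)) * ((-1 : ℝ) ^ (m - 1) * ee n m) := by
  unfold cc ee
  congr 1
  rw [sum_Icc_one, Finset.mul_sum]
  refine Finset.sum_congr rfl fun j hj => ?_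
  rw [Finset.mem_range] at hj
  have h1 : m - (j+1) = (m-1) - j := by omega
  rw [h1, neg_one_pow_sub (m-1) j (by omega)]
  push_cast
  ring

private lemma ee_rec (n M : ℕ) :
    ee (n+1) (M+1) = ((M:ℝ)+1) * (ee n (M+1) - ee n M) := by
  unfold ee
  have hM : ∑ j ∈ Finset.range M, (-1:ℝ)^j * ((M.choose (j+1)):ℝ) * ((j:ℝ)+1)^n
      = ∑ j ∈ Finset.range (M+1), (-1:ℝ)^j * ((M.choose (j+1)):ℝ) * ((j:ℝ)+1)^n := by
    rw [Finset.sum_range_succ, Nat.choose_succ_self]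
    simp
  rw [hM, ← Finset.sum_sub_distrib, Finset.mul_sum]
  refine Finset.sum_congr rfl fun j hj => ?_
  have h1 : ((M:ℝ)+1) * ((M.choose j):ℝ) = (((M+1).choose (j+1)):ℝ) * ((j:ℝ)+1) := by
    have := Nat.add_one_mul_choose_eq M j
    have := congrArg (Nat.cast (R := ℝ)) this
    push_cast at this
    linarith [this]
  have h2 : (((M+1).choose (j+1)):ℝ) = ((M.choose j):ℝ) + ((M.choose (j+1)):ℝ) := by
    have := Nat.choose_succ_succ M j
    exact_mod_cast congrArg (Nat.cast (R := ℝ)) this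
  calc (-1:ℝ)^j * (((M+1).choose (j+1)):ℝ) * ((j:ℝ)+1)^(n+1)
      = (-1:ℝ)^j * ((((M+1).choose (j+1)):ℝ) * ((j:ℝ)+1)) * ((j:ℝ)+1)^n := by ring
    _ = (-1:ℝ)^j * (((M:ℝ)+1) * ((M.choose j):ℝ)) * ((j:ℝ)+1)^n := by rw [← h1]
    _ = ((M:ℝ)+1) * ((-1:ℝ)^j * (((M+1).choose (j+1)):ℝ) * ((j:ℝ)+1)^n
          - (-1:ℝ)^j * ((M.choose (j+1)):ℝ) * ((j:ℝ)+1)^n) := by rw [h2]; ring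

private lemma ee_zero_eq_one (m : ℕ) (hm : 1 ≤ m) : ee 0 m = 1 := by
  unfold ee
  have h := Int.alternating_sum_range_choose (n := m)
  rw [if_neg (by omega)] at h
  have h' := congrArg (Int.cast (R := ℝ)) h
  push_cast at h'
  rw [Finset.sum_range_succ'] at h'
  norm_num at h'
  have h2 : ∑ k ∈ Finset.range m, (-1:ℝ)^(k+1) * ((m.choose (k+1)):ℝ)
      = -∑ k ∈ Finset.range m, (-1:ℝ)^k * ((m.choose (k+1)):ℝ) := by
    rw [← Finset.sum_neg_distrib]
    exact Finset.sum_congr rfl fun k _ => by ring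
  simp only [pow_zero, mul_one]
  linarith [h', h2]

private lemma ee_vanish : ∀ n, 1 ≤ n → ∀ m, n < m → ee n m = 0 := by
  intro n hn
  induction n, hn using Nat.le_induction with
  | base =>
    intro m hm
    obtain ⟨M, rfl⟩ : ∃ M, m = M + 1 := ⟨m - 1, by omega⟩
    rw [show (1:ℕ) = 0 + 1 from rfl, ee_rec 0 M,
      ee_zero_eq_one (M+1) (by omega), ee_zero_eq_one M (by omega)]
    ring
  | succ n hn ih =>
    intro m hm
    obtain ⟨M, rfl⟩ : ∃ M, m = M + 1 := ⟨m - 1, by omega⟩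
    rw [ee_rec n M, ih (M+1) (by omega), ih M (by omega)]
    ring

private lemma mul_cc (n m : ℕ) (hm : 1 ≤ m) :
    (m : ℝ) * cc n m = (-1 : ℝ) ^ (m - 1) * ee n m := by
  rw [cc_eq n m hm]
  have : (m : ℝ) ≠ 0 := by positivity
  field_simp

private lemma key (n : ℕ) (hn : 1 ≤ n) (u : ℝ) :
    ∑ m ∈ Finset.Icc 1 (n+1), cc (n+1) m * u ^ m
      = ∑ m ∈ Finset.Icc 1 n, ((m:ℝ) * cc n m) * (u ^ m + u ^ (m+1)) := by
  rw [sum_Icc_one, sum_Icc_one]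
  have hterm : ∀ M ∈ Finset.range (n+1), cc (n+1) (M+1) * u^(M+1)
      = (-1:ℝ)^M * ee n (M+1) * u^(M+1) - (-1:ℝ)^M * ee n M * u^(M+1) := by
    intro M _
    have h1 : cc (n+1) (M+1) = (-1:ℝ)^M * (ee n (M+1) - ee n M) := by
      rw [cc_eq (n+1) (M+1) (by omega)]
      rw [ee_rec n M]
      have : ((M:ℝ)+1) ≠ 0 := by positivity
      simp only [Nat.add_sub_cancel]
      push_cast
      field_simp
    rw [h1]; ring
  rw [Finset.sum_congr rfl hterm, Finset.sum_sub_distrib]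
  have hA : ∑ M ∈ Finset.range (n+1), (-1:ℝ)^M * ee n (M+1) * u^(M+1)
      = ∑ M ∈ Finset.range n, (-1:ℝ)^M * ee n (M+1) * u^(M+1) := by
    rw [Finset.sum_range_succ, ee_vanish n hn (n+1) (by omega)]
    simp
  have hB : ∑ M ∈ Finset.range (n+1), (-1:ℝ)^M * ee n M * u^(M+1)
      = ∑ K ∈ Finset.range n, (-1:ℝ)^(K+1) * ee n (K+1) * u^(K+2) := by
    rw [Finset.sum_range_succ']
    have : ee n 0 = 0 := by simp [ee]
    rw [this]
    simp only [mul_zero, zero_mul, add_zero]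
  rw [hA, hB, ← Finset.sum_sub_distrib]
  refine Finset.sum_congr rfl fun M hM => ?_
  rw [mul_cc n (M+1) (by omega)]
  simp only [Nat.add_sub_cancel]
  ring

private lemma hasDerivAt_v_pow (M : ℕ) (x : ℝ) (hx : 0 < x) :
    HasDerivAt (fun y => ((Real.exp y - 1)⁻¹) ^ (M+1))
      (-((M:ℝ)+1) * (((Real.exp x - 1)⁻¹) ^ (M+1) + ((Real.exp x - 1)⁻¹) ^ (M+2))) x := by
  have hu : Real.exp x - 1 ≠ 0 := by
    have : 1 < Real.exp x := by rw [← Real.exp_zero]; exact Real.exp_lt_exp.mpr hx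
    linarith
  have h1 : HasDerivAt (fun y => Real.exp y - 1) (Real.exp x) x :=
    (Real.hasDerivAt_exp x).sub_const 1
  have h2 := h1.inv hu
  have h3 := h2.pow (M+1)
  refine HasDerivAt.congr_deriv h3 ?_
  simp only [Nat.add_sub_cancel, Pi.inv_apply]
  push_cast
  obtain ⟨v, hv⟩ : ∃ v, Real.exp x = v + 1 := ⟨_, (sub_add_cancel _ 1).symm⟩
  rw [hv] at hu ⊢
  simp only [add_sub_cancel_right] at hu ⊢
  field_simp
  have hvv : v * v⁻¹ = 1 := mul_inv_cancel₀ hu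
  linear_combination (v * v⁻¹ ^ M + (v * v⁻¹ + 1) * v⁻¹ ^ M) * hvv

private lemma main_aux : ∀ j : ℕ, ∀ x : ℝ, 0 < x →
    iteratedDeriv j (fun x => (Real.exp x - 1)⁻¹) x
      = (-1:ℝ)^j * ∑ m ∈ Finset.Icc 1 (j+1), cc (j+1) m * ((Real.exp x - 1)⁻¹) ^ m := by
  intro j
  induction j with
  | zero =>
    intro x hx
    rw [iteratedDeriv_zero]
    have h1 : cc 1 1 = 1 := by norm_num [cc]
    simp [h1]
  | succ j ih =>
    intro x hx
    rw [iteratedDeriv_succ]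
    have hF : deriv (iteratedDeriv j (fun x => (Real.exp x - 1)⁻¹)) x
        = deriv (fun y => (-1:ℝ)^j *
            ∑ m ∈ Finset.Icc 1 (j+1), cc (j+1) m * ((Real.exp y - 1)⁻¹) ^ m) x := by
      apply Filter.EventuallyEq.deriv_eq
      filter_upwards [Ioi_mem_nhds hx] with y hy
      exact ih y hy
    rw [hF]
    have hsum : HasDerivAt
        (fun y => ∑ m ∈ Finset.Icc 1 (j+1), cc (j+1) m * ((Real.exp y - 1)⁻¹) ^ m)
        (∑ m ∈ Finset.Icc 1 (j+1),
          cc (j+1) m * (-(m:ℝ) * (((Real.exp x - 1)⁻¹) ^ m + ((Real.exp x - 1)⁻¹) ^ (m+1)))) x := by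
      apply HasDerivAt.fun_sum
      intro m hm
      rw [Finset.mem_Icc] at hm
      obtain ⟨M, rfl⟩ : ∃ M, m = M + 1 := ⟨m - 1, by omega⟩
      have h := (hasDerivAt_v_pow M x hx).const_mul (cc (j+1) (M+1))
      refine HasDerivAt.congr_deriv h ?_
      push_cast
      ring
    have hD := hsum.const_mul ((-1:ℝ)^j)
    rw [hD.deriv]
    rw [key (j+1) (by omega) ((Real.exp x - 1)⁻¹)]
    rw [Finset.mul_sum, Finset.mul_sum]
    refine Finset.sum_congr rfl fun m hm => ?_
    rw [pow_succ]
    ring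

/-- Explicit expansion of the iterated derivatives of `g(x) = (e^x − 1)⁻¹`:
with `c(n, m) = (1/m)·Σ_{k=1}^{m} (−1)^{m−k}·C(m,k)·kⁿ` one has
`(−1)^{n−1}·g^{(n−1)}(x) = Σ_{m=1}^{n} c(n,m)/(e^x − 1)^m` for all `n ≥ 1`, `x > 0`. -/
theorem iterated_deriv_g_expansion :
    let g : ℝ → ℝ := fun x => (Real.exp x - 1)⁻¹
    let c : ℕ → ℕ → ℝ := fun n m =>
      (1 / (m : ℝ)) * ∑ k ∈ Finset.Icc 1 m, (-1 : ℝ) ^ (m - k) * (m.choose k) * (k : ℝ) ^ n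
    ∀ n : ℕ, 1 ≤ n → ∀ x : ℝ, x > 0 →
      (-1 : ℝ) ^ (n - 1) * iteratedDeriv (n - 1) g x =
        ∑ m ∈ Finset.Icc 1 n, c n m / (Real.exp x - 1) ^ m := by
  intro g c n hn x hx
  obtain ⟨j, rfl⟩ : ∃ j, n = j + 1 := ⟨n - 1, by omega⟩
  show (-1:ℝ)^(j+1-1) * iteratedDeriv (j+1-1) (fun x => (Real.exp x - 1)⁻¹) x
      = ∑ m ∈ Finset.Icc 1 (j+1), cc (j+1) m / (Real.exp x - 1) ^ m
  simp only [Nat.add_sub_cancel]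
  rw [main_aux j x hx, ← mul_assoc, ← pow_add, Even.neg_one_pow (⟨j, rfl⟩ : Even (j + j)), one_mul]
  exact Finset.sum_congr rfl fun m _ => by rw [div_eq_mul_inv, inv_pow]
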